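/- arXiv:math/0201062 — 2 statements merged into one kernel-verified Lean document; each statement's English description precedes it below -/
import Mathlib

section
/- Let a be a symmetric positive definite d×d real matrix, E a skew-symmetric d×d real matrix, and H a real Hilbert space containing ℝ^d-valued elements with closed subspace F_pot. Suppose for each l ∈ ℝ^d, v_l ∈ F_pot is the unique solution of ⟨φ, (a+E)(l + v_l)⟩ = 0 for all φ ∈ F_pot, and define σ(a,E)l = ⟨(a+E)(l + v_l)⟩ (the mean value, a linear map of l). Then σ(a,−E) = σ(a,E)ᵀ, i.e., transposing the effective conductivity corresponds to reversing the sign of the skew-symmetric part. -/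
open Matrix MeasureTheory

/-- Reversing the sign of the skew-symmetric part `E` transposes the effective
conductivity: `σ(a, −E) = σ(a, E)ᵀ`.  Here `Fpot` is the closed subspace of
mean-zero potential fields in `L²(X,μ)^d`, `vE l` (resp. `vE' l`) is the unique
corrector in `Fpot` for the matrix `a + E` (resp. `a − E`), and the effective
conductivities are defined through the μ-mean of the fluxes. -/
theorem stmt6 {d : ℕ} {X : Type*} [MeasurableSpace X] (μ : Measure X)
    [IsProbabilityMeasure μ]
    (a : Matrix (Fin d) (Fin d) ℝ) (ha : a.PosDef)
    (E : X → Matrix (Fin d) (Fin d) ℝ)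
    (hEmeas : ∀ i j, Measurable fun x => E x i j)
    (hEskew : ∀ x, (E x)ᵀ = -(E x))
    (hEbdd : ∃ C : ℝ, ∀ x i j, |E x i j| ≤ C)
    (Fpot : Set (X → Fin d → ℝ))
    (hFpotL2 : ∀ f ∈ Fpot, MemLp f 2 μ)
    (hFpotMean : ∀ f ∈ Fpot, ∀ i, ∫ x, f x i ∂μ = 0)
    (vE vE' : (Fin d → ℝ) → X → Fin d → ℝ)
    (hvE : ∀ l, vE l ∈ Fpot) (hvE' : ∀ l, vE' l ∈ Fpot)
    (horthE : ∀ l, ∀ φ ∈ Fpot,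
      ∫ x, φ x ⬝ᵥ (a + E x).mulVec (l + vE l x) ∂μ = 0)
    (horthE' : ∀ l, ∀ φ ∈ Fpot,
      ∫ x, φ x ⬝ᵥ (a - E x).mulVec (l + vE' l x) ∂μ = 0)
    (huniqE : ∀ l, ∀ u ∈ Fpot,
      (∀ φ ∈ Fpot, ∫ x, φ x ⬝ᵥ (a + E x).mulVec (l + u x) ∂μ = 0) → u = vE l)
    (huniqE' : ∀ l, ∀ u ∈ Fpot,
      (∀ φ ∈ Fpot, ∫ x, φ x ⬝ᵥ (a - E x).mulVec (l + u x) ∂μ = 0) → u = vE' l)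
    (σ σ' : Matrix (Fin d) (Fin d) ℝ)
    (hσ : ∀ l, σ.mulVec l = fun i => ∫ x, ((a + E x).mulVec (l + vE l x)) i ∂μ)
    (hσ' : ∀ l, σ'.mulVec l = fun i => ∫ x, ((a - E x).mulVec (l + vE' l x)) i ∂μ) :
    σ' = σᵀ := by
  classical
  obtain ⟨C, hC⟩ := hEbdd
  -- components of F_pot elements are in L²
  have hcomp : ∀ f ∈ Fpot, ∀ i, MemLp (fun x => f x i) 2 μ := fun f hf i =>
    (ContinuousLinearMap.proj (R := ℝ) (φ := fun _ : Fin d => ℝ) i).comp_memLp'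
      (hFpotL2 f hf)
  -- entries of a ± E are essentially bounded
  have hMp : ∀ i k, MemLp (fun x => (a + E x) i k) ⊤ μ := by
    intro i k
    refine memLp_top_of_bound
      ((measurable_const.add (hEmeas i k)).aestronglyMeasurable) (|a i k| + C) ?_
    filter_upwards with x
    simp only [Matrix.add_apply, Real.norm_eq_abs]
    exact (abs_add_le _ _).trans (by linarith [hC x i k])
  have hMm : ∀ i k, MemLp (fun x => (a - E x) i k) ⊤ μ := by
    intro i k
    refine memLp_top_of_bound
      ((measurable_const.sub (hEmeas i k)).aestronglyMeasurable) (|a i k| + C) ?_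
    filter_upwards with x
    simp only [Matrix.sub_apply, Real.norm_eq_abs]
    exact (abs_sub _ _).trans (by linarith [hC x i k])
  -- flux components are in L²
  have key : ∀ (M : X → Matrix (Fin d) (Fin d) ℝ),
      (∀ i k, MemLp (fun x => M x i k) ⊤ μ) →
      ∀ (l : Fin d → ℝ) (v : X → Fin d → ℝ), v ∈ Fpot →
      ∀ k, MemLp (fun x => ((M x).mulVec (l + v x)) k) 2 μ := by
    intro M hM l v hv k
    have h : (fun x => ((M x).mulVec (l + v x)) k)
        = ∑ m : Fin d, fun x => M x k m * (l m + v x m) := by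
      funext x
      simp [Matrix.mulVec, dotProduct, Finset.sum_apply]
    rw [h]
    refine memLp_finset_sum' _ fun m _ => ?_
    have h2 : MemLp (fun x => l m + v x m) 2 μ :=
      by have := (memLp_const (μ := μ) (p := 2) (l m)).add (hcomp v hv m); exact this
    exact h2.smul (hM k m)
  -- dot products of componentwise-L² fields are integrable
  have hdotint : ∀ (φ ψ : X → Fin d → ℝ),
      (∀ k, MemLp (fun x => φ x k) 2 μ) → (∀ k, MemLp (fun x => ψ x k) 2 μ) →
      Integrable (fun x => φ x ⬝ᵥ ψ x) μ := by
    intro φ ψ hφ hψ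
    have h : (fun x => φ x ⬝ᵥ ψ x) = fun x => ∑ k : Fin d, φ x k * ψ x k := by
      funext x; simp [dotProduct]
    rw [h]
    refine integrable_finset_sum _ fun k _ => ?_
    exact memLp_one_iff_integrable.mp
      (MemLp.smul (r := 1) (hψ k) (hφ k) (hpqr := ⟨by norm_num [ENNReal.inv_two_add_inv_two]⟩))
  have hsym : aᵀ = a := ha.1.eq
  ext i j
  set ei : Fin d → ℝ := Pi.single i 1 with hei
  set ej : Fin d → ℝ := Pi.single j 1 with hej
  set v : X → Fin d → ℝ := vE ei with hv
  set v' : X → Fin d → ℝ := vE' ej with hv'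
  -- componentwise L² facts
  have hwe : ∀ k, MemLp (fun x => ei k + v x k) 2 μ := fun k =>
    by have := (memLp_const (μ := μ) (p := 2) (ei k)).add (hcomp v (hvE ei) k); exact this
  have hwe' : ∀ k, MemLp (fun x => ej k + v' x k) 2 μ := fun k =>
    by have := (memLp_const (μ := μ) (p := 2) (ej k)).add (hcomp v' (hvE' ej) k); exact this
  have hf : ∀ k, MemLp (fun x => ((a + E x).mulVec (ei + v x)) k) 2 μ :=
    key (fun x => a + E x) hMp ei v (hvE ei)
  have hf' : ∀ k, MemLp (fun x => ((a - E x).mulVec (ej + v' x)) k) 2 μ :=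
    key (fun x => a - E x) hMm ej v' (hvE' ej)
  have hvcomp : ∀ k, MemLp (fun x => v x k) 2 μ := hcomp v (hvE ei)
  have hv'comp : ∀ k, MemLp (fun x => v' x k) 2 μ := hcomp v' (hvE' ej)
  have hconst : ∀ (c : Fin d → ℝ) (k : Fin d), MemLp (fun _ : X => c k) 2 μ :=
    fun c k => memLp_const _
  -- integrability of the various dot products
  have I1 : Integrable (fun x => ei ⬝ᵥ (a - E x).mulVec (ej + v' x)) μ :=
    hdotint _ _ (hconst ei) hf'
  have I2 : Integrable (fun x => v x ⬝ᵥ (a - E x).mulVec (ej + v' x)) μ :=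
    hdotint _ _ hvcomp hf'
  have I3 : Integrable (fun x => ej ⬝ᵥ (a + E x).mulVec (ei + v x)) μ :=
    hdotint _ _ (hconst ej) hf
  have I4 : Integrable (fun x => v' x ⬝ᵥ (a + E x).mulVec (ei + v x)) μ :=
    hdotint _ _ hv'comp hf
  -- the pointwise symmetry identity
  have hpt : ∀ x, (ei + v x) ⬝ᵥ (a - E x).mulVec (ej + v' x)
      = (ej + v' x) ⬝ᵥ (a + E x).mulVec (ei + v x) := by
    intro x
    rw [Matrix.dotProduct_mulVec, ← Matrix.mulVec_transpose, Matrix.transpose_sub,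
      hsym, hEskew, sub_neg_eq_add, dotProduct_comm]
  -- σ' i j as an integral
  have h1 : σ' i j = ∫ x, ei ⬝ᵥ (a - E x).mulVec (ej + v' x) ∂μ := by
    have := congrFun (hσ' ej) i
    simp only [hej, Matrix.mulVec_single_one, Matrix.col_apply, mul_one] at this
    rw [this]
    refine integral_congr_ae (Filter.Eventually.of_forall fun x => ?_)
    simp [hei, hej, hv, hv', single_dotProduct]
  have h2 : σ j i = ∫ x, ej ⬝ᵥ (a + E x).mulVec (ei + v x) ∂μ := by
    have := congrFun (hσ ei) j
    simp only [hei, Matrix.mulVec_single_one, Matrix.col_apply, mul_one] at this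
    rw [this]
    refine integral_congr_ae (Filter.Eventually.of_forall fun x => ?_)
    simp [hei, hej, hv, hv', single_dotProduct]
  have hz' : ∫ x, v x ⬝ᵥ (a - E x).mulVec (ej + v' x) ∂μ = 0 :=
    horthE' ej v (hvE ei)
  have hz : ∫ x, v' x ⬝ᵥ (a + E x).mulVec (ei + v x) ∂μ = 0 :=
    horthE ei v' (hvE' ej)
  have step : ∫ x, (ei + v x) ⬝ᵥ (a - E x).mulVec (ej + v' x) ∂μ
      = ∫ x, (ej + v' x) ⬝ᵥ (a + E x).mulVec (ei + v x) ∂μ :=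
    integral_congr_ae (Filter.Eventually.of_forall hpt)
  have left : ∫ x, (ei + v x) ⬝ᵥ (a - E x).mulVec (ej + v' x) ∂μ = σ' i j := by
    have hsplit : ∀ x, (ei + v x) ⬝ᵥ (a - E x).mulVec (ej + v' x)
        = ei ⬝ᵥ (a - E x).mulVec (ej + v' x)
          + v x ⬝ᵥ (a - E x).mulVec (ej + v' x) := fun x =>
      add_dotProduct _ _ _
    rw [integral_congr_ae (Filter.Eventually.of_forall hsplit),
      integral_add I1 I2, hz', add_zero, h1]
  have right : ∫ x, (ej + v' x) ⬝ᵥ (a + E x).mulVec (ei + v x) ∂μ = σ j i := by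
    have hsplit : ∀ x, (ej + v' x) ⬝ᵥ (a + E x).mulVec (ei + v x)
        = ej ⬝ᵥ (a + E x).mulVec (ei + v x)
          + v' x ⬝ᵥ (a + E x).mulVec (ei + v x) := fun x =>
      add_dotProduct _ _ _
    rw [integral_congr_ae (Filter.Eventually.of_forall hsplit),
      integral_add I3 I4, hz, add_zero, h2]
  rw [Matrix.transpose_apply, ← left, step, right]
end

section
/- In the setting of the effective conductivity σ = σ(a,E,μ) of the operator ∇(a+E)∇, the symmetric part σ_sym satisfies the two-sided bound a ≤ σ_sym ≤ a + ⟨Eᵀ a⁻¹ E⟩ in the sense of quadratic forms, where ⟨·⟩ is the μ-mean of the matrix entries. -/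
open Matrix MeasureTheory

private lemma aux_mul_int {X : Type*} [MeasurableSpace X] {μ : Measure X}
    [IsFiniteMeasure μ] {f g : X → ℝ} (hf : MemLp f 2 μ) (hg : MemLp g 2 μ) :
    Integrable (fun x => f x * g x) μ := by
  have h := hf.smul (φ := g) hg (r := 1)
  exact (h.integrable le_rfl).congr (Filter.Eventually.of_forall fun x => by simp only [smul_eq_mul, Pi.mul_apply]; ring)

private lemma aux_int_dot {d : ℕ} {X : Type*} [MeasurableSpace X] (μ : Measure X)
    (c : Fin d → ℝ) (F : X → Fin d → ℝ) (hF : ∀ i, Integrable (fun x => F x i) μ) :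
    ∫ x, c ⬝ᵥ F x ∂μ = c ⬝ᵥ (fun i => ∫ x, F x i ∂μ) := by
  simp only [dotProduct]
  rw [integral_finset_sum _ fun i _ => (hF i).const_mul (c i)]
  exact Finset.sum_congr rfl fun i _ => integral_const_mul _ _

private lemma aux_skew_dot {d : ℕ} {S : Matrix (Fin d) (Fin d) ℝ} (hS : Sᵀ = -S)
    (u : Fin d → ℝ) : u ⬝ᵥ S *ᵥ u = 0 := by
  have h : u ⬝ᵥ S *ᵥ u = - (u ⬝ᵥ S *ᵥ u) := by
    calc u ⬝ᵥ S *ᵥ u = (u ᵥ* S) ⬝ᵥ u := dotProduct_mulVec u S u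
      _ = u ⬝ᵥ (Sᵀ *ᵥ u) := by rw [Matrix.mulVec_transpose, dotProduct_comm]
      _ = - (u ⬝ᵥ S *ᵥ u) := by rw [hS, Matrix.neg_mulVec, dotProduct_neg]
  linarith

/-- Two-sided quadratic-form bound on the symmetric part of the effective
conductivity: `a ≤ σ_sym ≤ a + ⟨Eᵀ a⁻¹ E⟩`, where `σ_sym = (σ + σᵀ)/2` and `⟨·⟩`
denotes the μ-mean of the matrix entries. -/
theorem stmt7 {d : ℕ} {X : Type*} [MeasurableSpace X] (μ : Measure X)
    [IsProbabilityMeasure μ]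
    (a : Matrix (Fin d) (Fin d) ℝ) (ha : a.PosDef)
    (E : X → Matrix (Fin d) (Fin d) ℝ)
    (hEmeas : ∀ i j, Measurable fun x => E x i j)
    (hEskew : ∀ x, (E x)ᵀ = -(E x))
    (hEbdd : ∃ C : ℝ, ∀ x i j, |E x i j| ≤ C)
    (Fpot : Set (X → Fin d → ℝ))
    (hFpotL2 : ∀ f ∈ Fpot, MemLp f 2 μ)
    (hFpotMean : ∀ f ∈ Fpot, ∀ i, ∫ x, f x i ∂μ = 0)
    (h0 : (fun _ => 0) ∈ Fpot)
    (v : (Fin d → ℝ) → X → Fin d → ℝ)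
    (hv : ∀ l, v l ∈ Fpot)
    (horth : ∀ l, ∀ φ ∈ Fpot,
      ∫ x, φ x ⬝ᵥ (a + E x).mulVec (l + v l x) ∂μ = 0)
    (σ : Matrix (Fin d) (Fin d) ℝ)
    (hσ : ∀ l, σ.mulVec l = fun i => ∫ x, ((a + E x).mulVec (l + v l x)) i ∂μ) :
    (((1 / 2 : ℝ) • (σ + σᵀ)) - a).PosSemidef ∧
    (a + (Matrix.of fun i j => ∫ x, ((E x)ᵀ * a⁻¹ * E x) i j ∂μ)
        - (1 / 2 : ℝ) • (σ + σᵀ)).PosSemidef := by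
  obtain ⟨C, hC⟩ := hEbdd
  -- basic matrix facts
  have haT : aᵀ = a := by
    ext i j
    have := congrFun (congrFun ha.1 i) j
    simpa [Matrix.conjTranspose_apply] using this
  have hdet : IsUnit a.det := isUnit_iff_ne_zero.2 ha.det_pos.ne'
  have haa : a * a⁻¹ = 1 := Matrix.mul_nonsing_inv a hdet
  have haiT : a⁻¹ᵀ = a⁻¹ := by rw [Matrix.transpose_nonsing_inv, haT]
  -- N x = Eᵀ a⁻¹ E
  have hNsymm : ∀ x, ((E x)ᵀ * a⁻¹ * E x)ᵀ = (E x)ᵀ * a⁻¹ * E x := by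
    intro x
    rw [Matrix.transpose_mul, Matrix.transpose_mul, Matrix.transpose_transpose, haiT,
      ← Matrix.mul_assoc]
  -- E entries are in L²
  have hE2 : ∀ i j, MemLp (fun x => E x i j) 2 μ := fun i j =>
    MemLp.of_bound (hEmeas i j).aestronglyMeasurable C
      (Filter.Eventually.of_forall fun x => by
        simpa [Real.norm_eq_abs] using hC x i j)
  have hEb : ∀ i j, ∃ c : ℝ, ∀ x, ‖E x i j‖ ≤ c := fun i j =>
    ⟨C, fun x => by simpa [Real.norm_eq_abs] using hC x i j⟩
  have hEq : ∀ (i j : Fin d) (q : X → ℝ), Integrable q μ →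
      Integrable (fun x => E x i j * q x) μ := fun i j q hq =>
    hq.bdd_mul (hEmeas i j).aestronglyMeasurable (Filter.Eventually.of_forall (hEb i j).choose_spec)
  -- entries of N are integrable
  have hNexp : ∀ (i j : Fin d) (x : X),
      ((E x)ᵀ * a⁻¹ * E x) i j = ∑ q, ∑ p, a⁻¹ p q * (E x p i * E x q j) := by
    intro i j x
    simp only [Matrix.mul_apply, Matrix.transpose_apply, Finset.sum_mul]
    exact Finset.sum_congr rfl fun q _ => Finset.sum_congr rfl fun p _ => by ring
  have hNint : ∀ i j, Integrable (fun x => ((E x)ᵀ * a⁻¹ * E x) i j) μ := by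
    intro i j
    have : (fun x => ((E x)ᵀ * a⁻¹ * E x) i j)
        = fun x => ∑ q, ∑ p, a⁻¹ p q * (E x p i * E x q j) := by
      funext x; exact hNexp i j x
    rw [this]
    exact integrable_finset_sum _ fun q _ => integrable_finset_sum _ fun p _ =>
      (aux_mul_int (hE2 p i) (hE2 q j)).const_mul _
  -- the mean matrix
  set Mb : Matrix (Fin d) (Fin d) ℝ :=
    Matrix.of fun i j => ∫ x, ((E x)ᵀ * a⁻¹ * E x) i j ∂μ with hMb
  -- key quadratic form estimates
  have key : ∀ l : Fin d → ℝ, ∃ I : ℝ,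
      l ⬝ᵥ σ *ᵥ l = l ⬝ᵥ a *ᵥ l + I ∧ 0 ≤ I ∧ I ≤ l ⬝ᵥ Mb *ᵥ l := by
    intro l
    set g : X → Fin d → ℝ := v l with hg
    have hg2 : MemLp g 2 μ := hFpotL2 _ (hv l)
    have hgi : ∀ i, MemLp (fun x => g x i) 2 μ := fun i =>
      (ContinuousLinearMap.proj (R := ℝ) (φ := fun _ : Fin d => ℝ) i).comp_memLp' hg2
    have hgint : ∀ i, Integrable (fun x => g x i) μ := fun i =>
      (hgi i).integrable one_le_two
    have hgmean : ∀ i, ∫ x, g x i ∂μ = 0 := hFpotMean _ (hv l)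
    -- integrability of the various scalar integrands
    have hJint : Integrable (fun x => g x ⬝ᵥ (E x *ᵥ l)) μ := by
      have h : (fun x => g x ⬝ᵥ (E x *ᵥ l))
          = fun x => ∑ i, ∑ j, E x i j * (l j * g x i) := by
        funext x
        simp only [dotProduct, Matrix.mulVec, Finset.mul_sum]
        exact Finset.sum_congr rfl fun i _ => Finset.sum_congr rfl fun j _ => by ring
      rw [h]
      exact integrable_finset_sum _ fun i _ => integrable_finset_sum _ fun j _ =>
        hEq i j _ ((hgint i).const_mul (l j))
    have hIint : Integrable (fun x => g x ⬝ᵥ (a *ᵥ g x)) μ := by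
      have h : (fun x => g x ⬝ᵥ (a *ᵥ g x))
          = fun x => ∑ i, ∑ j, a i j * (g x i * g x j) := by
        funext x
        simp only [dotProduct, Matrix.mulVec, Finset.mul_sum]
        exact Finset.sum_congr rfl fun i _ => Finset.sum_congr rfl fun j _ => by ring
      rw [h]
      exact integrable_finset_sum _ fun i _ => integrable_finset_sum _ fun j _ =>
        (aux_mul_int (hgi i) (hgi j)).const_mul _
    have ht2 : Integrable (fun x => (l ᵥ* a) ⬝ᵥ g x) μ := by
      have h : (fun x => (l ᵥ* a) ⬝ᵥ g x) = fun x => ∑ i, (l ᵥ* a) i * g x i := by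
        funext x; simp [dotProduct]
      rw [h]
      exact integrable_finset_sum _ fun i _ => (hgint i).const_mul _
    have ht2' : ∫ x, (l ᵥ* a) ⬝ᵥ g x ∂μ = 0 := by
      rw [aux_int_dot μ _ _ hgint]
      simp [dotProduct, hgmean]
    -- N-related integrability
    have hNl : ∀ i, Integrable (fun x => (((E x)ᵀ * a⁻¹ * E x) *ᵥ l) i) μ := by
      intro i
      have h : (fun x => (((E x)ᵀ * a⁻¹ * E x) *ᵥ l) i)
          = fun x => ∑ j, ((E x)ᵀ * a⁻¹ * E x) i j * l j := by
        funext x; simp [Matrix.mulVec, dotProduct]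
      rw [h]
      exact integrable_finset_sum _ fun j _ => (hNint i j).mul_const _
    have hKint : Integrable (fun x => l ⬝ᵥ ((E x)ᵀ * a⁻¹ * E x) *ᵥ l) μ := by
      have h : (fun x => l ⬝ᵥ ((E x)ᵀ * a⁻¹ * E x) *ᵥ l)
          = fun x => ∑ i, l i * (((E x)ᵀ * a⁻¹ * E x) *ᵥ l) i := by
        funext x; simp [dotProduct]
      rw [h]
      exact integrable_finset_sum _ fun i _ => (hNl i).const_mul _
    have hKval : ∫ x, l ⬝ᵥ ((E x)ᵀ * a⁻¹ * E x) *ᵥ l ∂μ = l ⬝ᵥ Mb *ᵥ l := by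
      rw [aux_int_dot μ l _ hNl]
      congr 1
      funext i
      have h : (fun x => (((E x)ᵀ * a⁻¹ * E x) *ᵥ l) i)
          = fun x => ∑ j, ((E x)ᵀ * a⁻¹ * E x) i j * l j := by
        funext x; simp [Matrix.mulVec, dotProduct]
      rw [h, integral_finset_sum _ fun j _ => (hNint i j).mul_const _]
      simp only [Matrix.mulVec, dotProduct, hMb, Matrix.of_apply]
      exact Finset.sum_congr rfl fun j _ => integral_mul_const _ _
    -- the integrability of the full integrands
    have hF1 : ∀ i, Integrable (fun x => ((a + E x) *ᵥ (l + g x)) i) μ := by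
      intro i
      have h : (fun x => ((a + E x) *ᵥ (l + g x)) i)
          = fun x => ∑ j, (a i j + E x i j) * (l j + g x j) := by
        funext x; simp [Matrix.mulVec, dotProduct]
      rw [h]
      refine integrable_finset_sum _ fun j _ => ?_
      have hq : Integrable (fun x => l j + g x j) μ :=
        (integrable_const (l j)).add (hgint j)
      have h1 := hq.const_mul (a i j)
      have h2 := hEq i j _ hq
      exact (h1.add h2).congr (Filter.Eventually.of_forall fun x => by simp only [Pi.add_apply]; ring)
    -- Step 1 : Q = ∫ l ⬝ᵥ (a+E)(l+g)
    have hQ : l ⬝ᵥ σ *ᵥ l = ∫ x, l ⬝ᵥ ((a + E x) *ᵥ (l + g x)) ∂μ := by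
      rw [hσ l]
      exact (aux_int_dot μ l _ hF1).symm
    -- pointwise decomposition of the integrand of hQ
    have hsplit : ∀ x, l ⬝ᵥ ((a + E x) *ᵥ (l + g x))
        = l ⬝ᵥ a *ᵥ l + (l ᵥ* a) ⬝ᵥ g x + -(g x ⬝ᵥ (E x *ᵥ l)) := by
      intro x
      have h1 : l ⬝ᵥ (E x *ᵥ g x) = -(g x ⬝ᵥ (E x *ᵥ l)) := by
        rw [dotProduct_mulVec, ← Matrix.mulVec_transpose, hEskew x, Matrix.neg_mulVec,
          neg_dotProduct, dotProduct_comm]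
      have h2 : l ⬝ᵥ (E x *ᵥ l) = 0 := aux_skew_dot (hEskew x) l
      rw [Matrix.add_mulVec, Matrix.mulVec_add, Matrix.mulVec_add]
      simp only [dotProduct_add]
      rw [dotProduct_mulVec l a (g x), h1, h2]
      ring
    -- Step 2 : Q = l⬝a l - J
    have hQ2 : l ⬝ᵥ σ *ᵥ l = l ⬝ᵥ a *ᵥ l - ∫ x, g x ⬝ᵥ (E x *ᵥ l) ∂μ := by
      rw [hQ]
      calc ∫ x, l ⬝ᵥ ((a + E x) *ᵥ (l + g x)) ∂μ
          = ∫ x, (l ⬝ᵥ a *ᵥ l + (l ᵥ* a) ⬝ᵥ g x + -(g x ⬝ᵥ (E x *ᵥ l))) ∂μ := by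
            exact integral_congr_ae (Filter.Eventually.of_forall hsplit)
        _ = (∫ x, (l ⬝ᵥ a *ᵥ l + (l ᵥ* a) ⬝ᵥ g x) ∂μ) + ∫ x, -(g x ⬝ᵥ (E x *ᵥ l)) ∂μ := by
            exact integral_add ((integrable_const _).add ht2) hJint.neg
        _ = l ⬝ᵥ a *ᵥ l - ∫ x, g x ⬝ᵥ (E x *ᵥ l) ∂μ := by
            rw [integral_add (integrable_const _) ht2, integral_const, ht2',
              integral_neg]
            simp [sub_eq_add_neg]
    -- Step 3 : orthogonality gives I = -J
    have horth' := horth l g (hv l)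
    have hsplit2 : ∀ x, g x ⬝ᵥ ((a + E x) *ᵥ (l + g x))
        = (g x ⬝ᵥ (E x *ᵥ l) + g x ⬝ᵥ (a *ᵥ g x)) + (a *ᵥ l) ⬝ᵥ g x := by
      intro x
      have h2 : g x ⬝ᵥ (E x *ᵥ g x) = 0 := aux_skew_dot (hEskew x) (g x)
      have h3 : g x ⬝ᵥ (a *ᵥ l) = (a *ᵥ l) ⬝ᵥ g x := dotProduct_comm _ _
      rw [Matrix.add_mulVec, Matrix.mulVec_add, Matrix.mulVec_add]
      simp only [dotProduct_add]
      rw [h2, h3]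
      ring
    have ht4 : Integrable (fun x => (a *ᵥ l) ⬝ᵥ g x) μ := by
      have h : (fun x => (a *ᵥ l) ⬝ᵥ g x) = fun x => ∑ i, (a *ᵥ l) i * g x i := by
        funext x; simp [dotProduct]
      rw [h]
      exact integrable_finset_sum _ fun i _ => (hgint i).const_mul _
    have ht4' : ∫ x, (a *ᵥ l) ⬝ᵥ g x ∂μ = 0 := by
      rw [aux_int_dot μ _ _ hgint]
      simp [dotProduct, hgmean]
    have hIJ : (∫ x, g x ⬝ᵥ (a *ᵥ g x) ∂μ) = - ∫ x, g x ⬝ᵥ (E x *ᵥ l) ∂μ := by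
      have h0' : ∫ x, g x ⬝ᵥ ((a + E x) *ᵥ (l + g x)) ∂μ
          = (∫ x, g x ⬝ᵥ (E x *ᵥ l) ∂μ + ∫ x, g x ⬝ᵥ (a *ᵥ g x) ∂μ) + 0 := by
        calc ∫ x, g x ⬝ᵥ ((a + E x) *ᵥ (l + g x)) ∂μ
            = ∫ x, ((g x ⬝ᵥ (E x *ᵥ l) + g x ⬝ᵥ (a *ᵥ g x)) + (a *ᵥ l) ⬝ᵥ g x) ∂μ :=
              integral_congr_ae (Filter.Eventually.of_forall hsplit2)
          _ = (∫ x, (g x ⬝ᵥ (E x *ᵥ l) + g x ⬝ᵥ (a *ᵥ g x)) ∂μ) + ∫ x, (a *ᵥ l) ⬝ᵥ g x ∂μ :=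
              integral_add (hJint.add hIint) ht4
          _ = (∫ x, g x ⬝ᵥ (E x *ᵥ l) ∂μ + ∫ x, g x ⬝ᵥ (a *ᵥ g x) ∂μ) + 0 := by
              rw [integral_add hJint hIint, ht4']
      rw [horth'] at h0'
      linarith
    refine ⟨∫ x, g x ⬝ᵥ (a *ᵥ g x) ∂μ, by rw [hQ2, hIJ]; ring, ?_, ?_⟩
    · -- nonnegativity
      refine integral_nonneg fun x => ?_
      have := ha.posSemidef.dotProduct_mulVec_nonneg (g x)
      simpa using this
    · -- upper bound
      -- pointwise : g ⬝ w ≤ ½ g⬝ag + ½ l⬝Nl  with  w = Eᵀ l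
      have hpoint : ∀ x, g x ⬝ᵥ ((E x)ᵀ *ᵥ l)
          ≤ (1/2) * (g x ⬝ᵥ (a *ᵥ g x)) + (1/2) * (l ⬝ᵥ ((E x)ᵀ * a⁻¹ * E x) *ᵥ l) := by
        intro x
        have hEN : E x * a⁻¹ * (E x)ᵀ = (E x)ᵀ * a⁻¹ * E x := by
          rw [hEskew x]
          simp [Matrix.neg_mul, Matrix.mul_neg]
        have hwN : ((E x)ᵀ *ᵥ l) ⬝ᵥ (a⁻¹ *ᵥ ((E x)ᵀ *ᵥ l))
            = l ⬝ᵥ ((E x)ᵀ * a⁻¹ * E x) *ᵥ l := by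
          rw [Matrix.mulVec_mulVec, Matrix.mulVec_transpose, ← dotProduct_mulVec,
            Matrix.mulVec_mulVec, ← Matrix.mul_assoc, hEN]
        set w : Fin d → ℝ := (E x)ᵀ *ᵥ l with hw
        have e1 : a *ᵥ (a⁻¹ *ᵥ w) = w := by
          rw [Matrix.mulVec_mulVec, haa, Matrix.one_mulVec]
        have e2 : (a⁻¹ *ᵥ w) ⬝ᵥ (a *ᵥ g x) = g x ⬝ᵥ w := by
          rw [dotProduct_mulVec, ← Matrix.mulVec_transpose, haT, e1, dotProduct_comm]
        have e3 : (a⁻¹ *ᵥ w) ⬝ᵥ w = w ⬝ᵥ (a⁻¹ *ᵥ w) := dotProduct_comm _ _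
        have hpos := ha.posSemidef.dotProduct_mulVec_nonneg (g x - a⁻¹ *ᵥ w)
        have hexp : (g x - a⁻¹ *ᵥ w) ⬝ᵥ (a *ᵥ (g x - a⁻¹ *ᵥ w))
            = g x ⬝ᵥ (a *ᵥ g x) - 2 * (g x ⬝ᵥ w) + w ⬝ᵥ (a⁻¹ *ᵥ w) := by
          rw [Matrix.mulVec_sub, e1]
          rw [sub_dotProduct, dotProduct_sub, dotProduct_sub, e2, e3]
          ring
        have hpos' : 0 ≤ g x ⬝ᵥ (a *ᵥ g x) - 2 * (g x ⬝ᵥ w) + w ⬝ᵥ (a⁻¹ *ᵥ w) := by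
          rw [← hexp]
          simpa using hpos
        rw [hwN] at hpos'
        linarith
      -- I = ∫ g ⬝ w
      have hgw : ∀ x, g x ⬝ᵥ ((E x)ᵀ *ᵥ l) = -(g x ⬝ᵥ (E x *ᵥ l)) := by
        intro x
        rw [hEskew x, Matrix.neg_mulVec, dotProduct_neg]
      have hgwint : Integrable (fun x => g x ⬝ᵥ ((E x)ᵀ *ᵥ l)) μ := by
        have h : (fun x => g x ⬝ᵥ ((E x)ᵀ *ᵥ l)) = fun x => -(g x ⬝ᵥ (E x *ᵥ l)) := by
          funext x; exact hgw x
        rw [h]; exact hJint.neg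
      have hIgw : ∫ x, g x ⬝ᵥ (a *ᵥ g x) ∂μ = ∫ x, g x ⬝ᵥ ((E x)ᵀ *ᵥ l) ∂μ := by
        rw [hIJ, ← integral_neg]
        exact integral_congr_ae (Filter.Eventually.of_forall fun x => (hgw x).symm)
      have hmono : ∫ x, g x ⬝ᵥ ((E x)ᵀ *ᵥ l) ∂μ
          ≤ ∫ x, ((1/2) * (g x ⬝ᵥ (a *ᵥ g x)) + (1/2) * (l ⬝ᵥ ((E x)ᵀ * a⁻¹ * E x) *ᵥ l)) ∂μ :=
        integral_mono hgwint ((hIint.const_mul _).add (hKint.const_mul _)) hpoint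
      rw [integral_add (hIint.const_mul _) (hKint.const_mul _), integral_const_mul,
        integral_const_mul, hKval, ← hIgw] at hmono
      linarith
  -- symmetric part has the same quadratic form as σ
  have hsym : ∀ l : Fin d → ℝ, l ⬝ᵥ ((1 / 2 : ℝ) • (σ + σᵀ)) *ᵥ l = l ⬝ᵥ σ *ᵥ l := by
    intro l
    have h : l ⬝ᵥ σᵀ *ᵥ l = l ⬝ᵥ σ *ᵥ l := by
      rw [Matrix.mulVec_transpose, dotProduct_comm l (l ᵥ* σ), ← dotProduct_mulVec]
    rw [Matrix.smul_mulVec, dotProduct_smul, Matrix.add_mulVec, dotProduct_add, h,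
      smul_eq_mul]
    ring
  -- hermitian facts
  have hermσ : ((1 / 2 : ℝ) • (σ + σᵀ)).IsHermitian := by
    show _ᴴ = _
    rw [Matrix.conjTranspose_eq_transpose_of_trivial, Matrix.transpose_smul,
      Matrix.transpose_add, Matrix.transpose_transpose, add_comm]
  have herma : a.IsHermitian := ha.1
  have hermM : Mb.IsHermitian := by
    show _ᴴ = _
    rw [Matrix.conjTranspose_eq_transpose_of_trivial]
    ext i j
    show (∫ x, ((E x)ᵀ * a⁻¹ * E x) j i ∂μ) = ∫ x, ((E x)ᵀ * a⁻¹ * E x) i j ∂μ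
    refine integral_congr_ae (Filter.Eventually.of_forall fun x => ?_)
    exact (congrFun (congrFun (hNsymm x) j) i).symm
  constructor
  · refine .of_dotProduct_mulVec_nonneg (hermσ.sub herma) fun l => ?_
    obtain ⟨I, hQ, hI0, _⟩ := key l
    simp only [star_trivial]
    rw [Matrix.sub_mulVec, dotProduct_sub, hsym l, hQ]
    simpa using hI0
  · refine .of_dotProduct_mulVec_nonneg ((herma.add hermM).sub hermσ) fun l => ?_
    obtain ⟨I, hQ, _, hIK⟩ := key l
    simp only [star_trivial]
    rw [Matrix.sub_mulVec, dotProduct_sub, hsym l, hQ, Matrix.add_mulVec, dotProduct_add]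
    simpa using hIK
end
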